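/- arXiv:1207.2808 — 3 statements merged into one kernel-verified Lean document; each statement's English description precedes it below -/
import Mathlib

section
/- For the d-shift S = (S_1,…,S_d) on the Drury–Arveson space H²_d, the commutators [S_i*, S_j] = S_i* S_j − S_j S_i* belong to the Schatten class L^p for every p > d and all 1 ≤ i, j ≤ d; in particular trace(|[S_i*, S_j]|^p) < ∞ for all p > d. -/
open scoped InnerProductSpace
open MvPolynomial Module

noncomputable section

/-- The `n`-th approximation number of a bounded operator: the distance from `T`
to the set of operators of rank at most `n`. For compact operators on Hilbert space
these are the singular values. -/
def approxNumber {H K : Type*} [NormedAddCommGroup H] [NormedAddCommGroup K]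
    [NormedSpace ℂ H] [NormedSpace ℂ K] (T : H →L[ℂ] K) (n : ℕ) : ℝ :=
  sInf {c : ℝ | ∃ F : H →L[ℂ] K,
    Module.rank ℂ (LinearMap.range (F : H →ₗ[ℂ] K)) ≤ (n : Cardinal) ∧ c = ‖T - F‖}

/-- Membership in the Schatten `p`-class, expressed via approximation numbers
(= singular values): `∑ aₙ(T)^p < ∞`. -/
def MemSchatten {H K : Type*} [NormedAddCommGroup H] [NormedAddCommGroup K]
    [NormedSpace ℂ H] [NormedSpace ℂ K] (p : ℝ) (T : H →L[ℂ] K) : Prop :=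
  Summable fun n : ℕ => approxNumber T n ^ p


/-- Helper instance: the bounded operators on a normed space form a topological semiring. -/
instance {F : Type*} [NormedAddCommGroup F] [NormedSpace ℂ F] :
    IsTopologicalSemiring (F →L[ℂ] F) := inferInstance

/-- The Drury–Arveson space `H²_d`: a Hilbert space completion of `ℂ[z₁,…,z_d]`
with the inner product `⟨z^α, z^β⟩ = δ_{αβ} α!/(|α|)!`, together with the `d`-shift. -/
structure DruryArveson (d : ℕ) where
  H : Type
  [normedAddCommGroup : NormedAddCommGroup H]
  [innerProductSpace : InnerProductSpace ℂ H]
  [completeSpace : CompleteSpace H]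
  emb : MvPolynomial (Fin d) ℂ →ₗ[ℂ] H
  denseRange : DenseRange emb
  inner_monomial : ∀ α β : Fin d →₀ ℕ,
    (inner ℂ (emb (monomial α (1 : ℂ))) (emb (monomial β (1 : ℂ))) : ℂ) =
      if α = β then (∏ i, ((α i).factorial : ℂ)) / ((∑ i, α i).factorial : ℂ) else 0
  shift : Fin d → H →L[ℂ] H
  shift_apply : ∀ (i : Fin d) (p : MvPolynomial (Fin d) ℂ), shift i (emb p) = emb (X i * p)

attribute [instance] DruryArveson.normedAddCommGroup DruryArveson.innerProductSpace
  DruryArveson.completeSpace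

namespace DruryArveson

variable {d : ℕ} (DA : DruryArveson d)

/-- The quotient module `F_I = H²_d ⊖ closure(I)`. -/
def FI (I : Ideal (MvPolynomial (Fin d) ℂ)) : Submodule ℂ DA.H :=
  ((Submodule.map DA.emb (Submodule.restrictScalars ℂ I)).topologicalClosure)ᗮ

instance (I : Ideal (MvPolynomial (Fin d) ℂ)) : CompleteSpace (DA.FI I) :=
  (Submodule.isClosed_orthogonal _).completeSpace_coe

/-- The compressed shift `S_i^I = P_{F_I} S_i |_{F_I}`. -/
def quotShift (I : Ideal (MvPolynomial (Fin d) ℂ)) (i : Fin d) : DA.FI I →L[ℂ] DA.FI I :=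
  (Submodule.orthogonalProjection (DA.FI I)).comp ((DA.shift i).comp (DA.FI I).subtypeL)

/-- The orthogonal projection of `H²_d` onto `F_I`, as an operator on `H²_d`. -/
def projFI (I : Ideal (MvPolynomial (Fin d) ℂ)) : DA.H →L[ℂ] DA.H :=
  (DA.FI I).subtypeL.comp (Submodule.orthogonalProjection (DA.FI I))

/-- `F_I` is `p`-essentially normal: all commutators `[S_i^I, S_j^{I*}]` lie in
the Schatten `p`-class. -/
def PEssentiallyNormal (I : Ideal (MvPolynomial (Fin d) ℂ)) (p : ℝ) : Prop :=
  ∀ i j : Fin d,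
    MemSchatten p
      (DA.quotShift I i ∘L ContinuousLinearMap.adjoint (DA.quotShift I j)
        - ContinuousLinearMap.adjoint (DA.quotShift I j) ∘L DA.quotShift I i)

end DruryArveson

/-- An ideal of `ℂ[z₁,…,z_d]` is homogeneous if it contains all homogeneous components
of each of its elements. -/
def IsHomogeneousIdeal {d : ℕ} (I : Ideal (MvPolynomial (Fin d) ℂ)) : Prop :=
  ∀ p ∈ I, ∀ n : ℕ, homogeneousComponent n p ∈ I

/-- `HasIdealDim I D` says that `D = deg h_I + 1`, where `h_I` is the Hilbert polynomial
of the homogeneous ideal `I`, i.e. `h_I(n) = dim (H_n ⊖ I_n)` for all large `n`. -/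
def HasIdealDim {d : ℕ} (I : Ideal (MvPolynomial (Fin d) ℂ)) (D : ℕ) : Prop :=
  ∃ h : Polynomial ℚ,
    (∀ᶠ n : ℕ in Filter.atTop,
      h.eval (n : ℚ) =
        ((finrank ℂ ↥(homogeneousSubmodule (Fin d) ℂ n)
          - finrank ℂ ↥(Submodule.restrictScalars ℂ I ⊓ homogeneousSubmodule (Fin d) ℂ n) : ℕ) : ℚ)) ∧
    D = h.natDegree + 1

/-- The zero set in the open unit ball `𝔹_d` of an ideal of polynomials. -/
def zeroVariety {d : ℕ} (I : Ideal (MvPolynomial (Fin d) ℂ)) : Set (EuclideanSpace ℂ (Fin d)) :=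
  {z | ‖z‖ < 1 ∧ ∀ p ∈ I, MvPolynomial.eval (fun i => z i) p = 0}

/-- A homogeneous variety in `𝔹_d` is the zero set in the ball of a homogeneous ideal. -/
def IsHomogeneousVariety {d : ℕ} (V : Set (EuclideanSpace ℂ (Fin d))) : Prop :=
  ∃ I : Ideal (MvPolynomial (Fin d) ℂ), IsHomogeneousIdeal I ∧ V = zeroVariety I

/-- The ideal `I(V)` of polynomials vanishing on `V`. -/
def ballVanishingIdeal {d : ℕ} (V : Set (EuclideanSpace ℂ (Fin d))) :
    Ideal (MvPolynomial (Fin d) ℂ) where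
  carrier := {p | ∀ z ∈ V, MvPolynomial.eval (fun i => z i) p = 0}
  add_mem' := fun hp hq z hz => by simp [hp z hz, hq z hz]
  zero_mem' := fun z hz => by simp
  smul_mem' := fun c p hp z hz => by simp [smul_eq_mul, hp z hz]

/-- `F_V := F_{I(V)}`. -/
def DruryArveson.FV {d : ℕ} (DA : DruryArveson d) (V : Set (EuclideanSpace ℂ (Fin d))) :
    Submodule ℂ DA.H :=
  DA.FI (ballVanishingIdeal V)

section DAhelp

open Finsupp ContinuousLinearMap

variable {d : ℕ} (DA : DruryArveson d)

/-- embedded monomial -/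
def ee (α : Fin d →₀ ℕ) : DA.H := DA.emb (monomial α 1)

/-- squared norm weight -/
def ww (α : Fin d →₀ ℕ) : ℝ :=
  (∏ k, ((α k).factorial : ℝ)) / ((∑ k, α k).factorial : ℝ)

lemma ww_pos (α : Fin d →₀ ℕ) : 0 < ww α := by
  apply div_pos
  · exact Finset.prod_pos fun k _ => by exact_mod_cast (α k).factorial_pos
  · exact_mod_cast (∑ k, α k).factorial_pos

lemma inner_ee (α β : Fin d →₀ ℕ) :
    (inner ℂ (ee DA α) (ee DA β) : ℂ) = if α = β then ((ww α : ℝ) : ℂ) else 0 := by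
  rw [ee, ee, DA.inner_monomial]
  split_ifs with h
  · rw [ww]; push_cast; ring
  · rfl

lemma norm_ee_sq (α : Fin d →₀ ℕ) : ‖ee DA α‖ ^ 2 = ww α := by
  have h := inner_ee DA α α
  rw [if_pos rfl] at h
  have h2 : (inner ℂ (ee DA α) (ee DA α) : ℂ) = ((‖ee DA α‖ : ℝ) : ℂ) ^ 2 :=
    inner_self_eq_norm_sq_to_K _
  rw [h2] at h
  exact_mod_cast h

end DAhelp

section DAhelp2

open Finsupp ContinuousLinearMap

variable {d : ℕ} (DA : DruryArveson d)

lemma dense_emb : Dense ((LinearMap.range DA.emb : Submodule ℂ DA.H) : Set DA.H) := by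
  rw [LinearMap.coe_range]; exact DA.denseRange

/-- two vectors with equal inner products against all embedded monomials coincide -/
lemma ext_ee {x y : DA.H} (h : ∀ β : Fin d →₀ ℕ,
    (inner ℂ x (ee DA β) : ℂ) = inner ℂ y (ee DA β)) : x = y := by
  apply (dense_emb DA).eq_of_inner_left (𝕜 := ℂ)
  rintro v ⟨p, rfl⟩
  have hp : DA.emb p = ∑ β ∈ p.support, (coeff β p) • ee DA β := by
    conv_lhs => rw [p.as_sum]
    rw [map_sum]
    refine Finset.sum_congr rfl fun β _ => ?_
    rw [ee, ← map_smul]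
    congr 1
    rw [MvPolynomial.smul_monomial, smul_eq_mul, mul_one]
  simp only [hp, inner_sum, inner_smul_right]
  exact Finset.sum_congr rfl fun β _ => by rw [h β]

lemma shift_ee (k : Fin d) (α : Fin d →₀ ℕ) :
    DA.shift k (ee DA α) = ee DA (α + single k 1) := by
  rw [ee, DA.shift_apply, ee]
  congr 1
  rw [X, monomial_mul, one_mul, add_comm]

lemma sum_add_single (α : Fin d →₀ ℕ) (k : Fin d) :
    (∑ m, (α + single k 1 : Fin d →₀ ℕ) m) = (∑ m, α m) + 1 := by
  simp only [Finsupp.add_apply, Finset.sum_add_distrib]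
  congr 1
  simp [Finsupp.single_apply]

lemma sum_sub_single (k : Fin d) (α : Fin d →₀ ℕ) (h : 1 ≤ α k) :
    (∑ m, (α - single k 1 : Fin d →₀ ℕ) m) + 1 = ∑ m, α m := by
  simp only [Finsupp.tsub_apply]
  rw [← Finset.add_sum_erase _ _ (Finset.mem_univ k),
    ← Finset.add_sum_erase _ (fun m => α m) (Finset.mem_univ k)]
  have hrest : ∀ m ∈ Finset.univ.erase k,
      α m - (single k 1 : Fin d →₀ ℕ) m = α m := by
    intro m hm
    rw [Finsupp.single_apply, if_neg (Finset.ne_of_mem_erase hm).symm, Nat.sub_zero]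
  rw [Finset.sum_congr rfl hrest, Finsupp.single_apply, if_pos rfl]
  have hx : (Finset.univ.erase k).sum ⇑α = ∑ x ∈ Finset.univ.erase k, α x := rfl
  rw [hx]
  omega

lemma prod_sub_single_fact (k : Fin d) (α : Fin d →₀ ℕ) (h : 1 ≤ α k) :
    (α k : ℝ) * ∏ m, (((α - single k 1 : Fin d →₀ ℕ) m).factorial : ℝ) =
      ∏ m, ((α m).factorial : ℝ) := by
  rw [← Finset.mul_prod_erase _ _ (Finset.mem_univ k),
    ← Finset.mul_prod_erase _ (fun m => ((α m).factorial : ℝ)) (Finset.mem_univ k)]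
  have hrest : ∀ m ∈ Finset.univ.erase k,
      (((α - single k 1 : Fin d →₀ ℕ) m).factorial : ℝ) = ((α m).factorial : ℝ) := by
    intro m hm
    rw [Finsupp.tsub_apply, Finsupp.single_apply, if_neg (Finset.ne_of_mem_erase hm).symm,
      Nat.sub_zero]
  rw [Finset.prod_congr rfl hrest, Finsupp.tsub_apply, Finsupp.single_apply, if_pos rfl]
  rw [← mul_assoc]
  congr 1
  rw [← Nat.cast_mul]
  norm_cast
  exact Nat.mul_factorial_pred (by omega)

lemma ww_sub_single (k : Fin d) (α : Fin d →₀ ℕ) (h : 1 ≤ α k) :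
    ((α k : ℝ) / ((∑ m, α m : ℕ) : ℝ)) * ww (α - single k 1) = ww α := by
  rw [ww, ww]
  rw [← sum_sub_single k α h]
  rw [Nat.factorial_succ, ← prod_sub_single_fact k α h]
  set n' : ℕ := ∑ m, (α - single k 1 : Fin d →₀ ℕ) m with hn'
  have h1 : ((n' + 1 : ℕ) : ℝ) ≠ 0 := by positivity
  have h2 : ((n'.factorial : ℕ) : ℝ) ≠ 0 := by exact_mod_cast (Nat.factorial_pos n').ne'
  push_cast
  push_cast at h1
  field_simp

lemma adjoint_shift_ee (k : Fin d) (α : Fin d →₀ ℕ) :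
    (ContinuousLinearMap.adjoint (DA.shift k)) (ee DA α) =
      (((α k : ℝ) / ((∑ m, α m : ℕ) : ℝ) : ℝ) : ℂ) • ee DA (α - single k 1) := by
  apply ext_ee DA
  intro β
  rw [adjoint_inner_left, shift_ee, inner_ee, inner_smul_left, inner_ee]
  rw [Complex.conj_ofReal]
  rcases Nat.eq_zero_or_pos (α k) with h0 | hpos
  · have hne : α ≠ β + single k 1 := by
      intro hα
      have hk : α k = (β + single k 1 : Fin d →₀ ℕ) k := by rw [hα]
      simp [Finsupp.single_apply] at hk
      omega
    rw [if_neg hne, h0]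
    simp
  · have hle : single k 1 ≤ α := by rwa [Finsupp.single_le_iff]
    have hiff : α = β + single k 1 ↔ α - single k 1 = β := by
      constructor
      · rintro rfl; exact add_tsub_cancel_right _ _
      · rintro rfl; exact (tsub_add_cancel_of_le hle).symm
    by_cases hb : α - single k 1 = β
    · rw [if_pos (hiff.mpr hb), if_pos hb, ← Complex.ofReal_mul, ww_sub_single k α hpos]
    · rw [if_neg (fun hx => hb (hiff.mp hx)), if_neg hb, mul_zero]

end DAhelp2

section DAhelp3

open Finsupp ContinuousLinearMap

variable {d : ℕ} (DA : DruryArveson d)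

/-- the commutator coefficient -/
def cc (i j : Fin d) (α : Fin d →₀ ℕ) : ℝ :=
  ((α i + (single j 1 : Fin d →₀ ℕ) i : ℕ) : ℝ) / (((∑ m, α m) + 1 : ℕ) : ℝ)
    - (α i : ℝ) / ((∑ m, α m : ℕ) : ℝ)

lemma comm_ee (i j : Fin d) (α : Fin d →₀ ℕ) :
    (ContinuousLinearMap.adjoint (DA.shift i) ∘L DA.shift j
        - DA.shift j ∘L ContinuousLinearMap.adjoint (DA.shift i)) (ee DA α)
      = ((cc i j α : ℝ) : ℂ) • ee DA (α + single j 1 - single i 1) := by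
  simp only [ContinuousLinearMap.sub_apply, ContinuousLinearMap.comp_apply]
  rw [shift_ee, adjoint_shift_ee, adjoint_shift_ee, map_smul, shift_ee]
  rw [sum_add_single]
  by_cases hpos : 1 ≤ α i
  · have hle : single i 1 ≤ α := Finsupp.single_le_iff.mpr hpos
    have hvec : (α - single i 1) + single j 1 = α + single j 1 - single i 1 :=
      tsub_add_eq_add_tsub hle
    rw [hvec, ← sub_smul]
    congr 1
    rw [cc, Complex.ofReal_sub]
    norm_num [Finsupp.add_apply]
  · have h0 : α i = 0 := by omega
    have hz : (((α i : ℝ) / ((∑ m, α m : ℕ) : ℝ) : ℝ) : ℂ) = 0 := by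
      rw [h0]; simp
    rw [hz, zero_smul, sub_zero, cc, h0]
    rw [Finsupp.add_apply, h0]
    simp

lemma prod_add_single_fact (j : Fin d) (α : Fin d →₀ ℕ) :
    (∏ m, (((α + single j 1 : Fin d →₀ ℕ) m).factorial : ℝ)) =
      ((α j + 1 : ℕ) : ℝ) * ∏ m, ((α m).factorial : ℝ) := by
  rw [← Finset.mul_prod_erase _ _ (Finset.mem_univ j),
    ← Finset.mul_prod_erase _ (fun m => ((α m).factorial : ℝ)) (Finset.mem_univ j)]
  have hrest : ∀ m ∈ Finset.univ.erase j,
      (((α + single j 1 : Fin d →₀ ℕ) m).factorial : ℝ) = ((α m).factorial : ℝ) := by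
    intro m hm
    rw [Finsupp.add_apply, Finsupp.single_apply, if_neg (Finset.ne_of_mem_erase hm).symm,
      Nat.add_zero]
  rw [Finset.prod_congr rfl hrest, Finsupp.add_apply, Finsupp.single_apply, if_pos rfl]
  rw [← mul_assoc]
  congr 1
  rw [← Nat.cast_mul]
  norm_cast

lemma alpha_le_sum (α : Fin d →₀ ℕ) (k : Fin d) : α k ≤ ∑ m, α m :=
  Finset.single_le_sum (f := fun m => α m) (fun _ _ => Nat.zero_le _) (Finset.mem_univ k)

lemma key_ineq (i j : Fin d) (α : Fin d →₀ ℕ) (hn : 1 ≤ ∑ m, α m) :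
    (cc i j α) ^ 2 * ww (α + single j 1 - single i 1)
      ≤ (2 / (((∑ m, α m : ℕ) : ℝ) + 1)) ^ 2 * ww α := by
  set n : ℕ := ∑ m, α m with hsn
  have hN : (1 : ℝ) ≤ (n : ℝ) := by exact_mod_cast hn
  have hAn : ((α i : ℕ) : ℝ) ≤ (n : ℝ) := by exact_mod_cast alpha_le_sum α i
  have hBn : ((α j : ℕ) : ℝ) ≤ (n : ℝ) := by exact_mod_cast alpha_le_sum α j
  by_cases hij : i = j
  · subst hij
    have hsig : α + single i 1 - single i 1 = α := add_tsub_cancel_right _ _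
    rw [hsig]
    have hcc : cc i i α = ((n : ℝ) - (α i : ℝ)) / ((n : ℝ) * ((n : ℝ) + 1)) := by
      rw [cc, Finsupp.single_apply, if_pos rfl, ← hsn]
      push_cast
      field_simp
      ring
    have h2 : cc i i α ≤ 2 / ((n : ℝ) + 1) := by
      rw [hcc, div_le_div_iff₀ (by nlinarith) (by nlinarith)]
      nlinarith
    have h1 : -(2 / ((n : ℝ) + 1)) ≤ cc i i α := by
      rw [hcc]
      have : (0:ℝ) ≤ ((n : ℝ) - (α i : ℝ)) / ((n : ℝ) * ((n : ℝ) + 1)) := by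
        apply div_nonneg (by linarith) (by nlinarith)
      have h2' : (0:ℝ) < 2 / ((n : ℝ) + 1) := by positivity
      linarith
    exact mul_le_mul_of_nonneg_right (sq_le_sq' h1 h2) (ww_pos _).le
  · have hs1 : (single j 1 : Fin d →₀ ℕ) i = 0 := by
      rw [Finsupp.single_apply, if_neg (Ne.symm hij)]
    by_cases hA : 1 ≤ α i
    · -- main case
      have hA1 : (1 : ℝ) ≤ ((α i : ℕ) : ℝ) := by exact_mod_cast hA
      have hcc : cc i j α = -(((α i : ℕ) : ℝ) / ((n : ℝ) * ((n : ℝ) + 1))) := by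
        rw [cc, hs1, ← hsn]
        push_cast
        field_simp
        ring
      -- degree of sigma
      have haj : (α + single j 1 : Fin d →₀ ℕ) i = α i := by
        rw [Finsupp.add_apply, hs1, Nat.add_zero]
      have hAi' : 1 ≤ (α + single j 1 : Fin d →₀ ℕ) i := by rw [haj]; exact hA
      have hsig_sum : (∑ m, (α + single j 1 - single i 1 : Fin d →₀ ℕ) m) = n := by
        have := sum_sub_single i (α + single j 1) hAi'
        rw [sum_add_single] at this
        omega
      -- product identity
      have hprod := prod_sub_single_fact i (α + single j 1) hAi'
      rw [prod_add_single_fact, haj] at hprod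
      -- now: (α i) * ∏ fact sig = (α j + 1) * ∏ fact α
      have hrel : ((α i : ℕ) : ℝ) * ww (α + single j 1 - single i 1)
          = ((α j + 1 : ℕ) : ℝ) * ww α := by
        rw [ww, ww, hsig_sum, ← hsn]
        rw [mul_div_assoc', mul_div_assoc', hprod]
      set A : ℝ := ((α i : ℕ) : ℝ)
      set B : ℝ := ((α j + 1 : ℕ) : ℝ)
      set N : ℝ := (n : ℝ)
      set ws : ℝ := ww (α + single j 1 - single i 1)
      set wa : ℝ := ww α
      have hws : 0 < ws := ww_pos _
      have hwa : 0 < wa := ww_pos _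
      have hB : B ≤ N + 1 := by
        have hBc : B = ((α j : ℕ) : ℝ) + 1 := by rw [show B = ((α j + 1 : ℕ) : ℝ) from rfl]; push_cast; ring
        rw [hBc]; linarith
      have hgoal : A * B ≤ 2 * N ^ 2 := by nlinarith
      rw [hcc]
      have hNpos : (0:ℝ) < N := by linarith
      have h1 : (-(A / (N * (N + 1)))) ^ 2 * ws = (A * (A * ws)) / (N * (N + 1)) ^ 2 := by
        rw [neg_sq, div_pow, div_mul_eq_mul_div]
        ring
      have h2 : (2 / (N + 1)) ^ 2 * wa = (4 * wa) / (N + 1) ^ 2 := by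
        rw [div_pow, div_mul_eq_mul_div]
        ring
      rw [h1, h2, hrel, div_le_div_iff₀ (by positivity) (by positivity)]
      nlinarith [mul_le_mul_of_nonneg_right hgoal (mul_nonneg hwa.le (sq_nonneg (N + 1)))]
    · have h0 : α i = 0 := by omega
      have hcc : cc i j α = 0 := by
        rw [cc, hs1, h0]
        simp
      rw [hcc]
      have h0' : (0:ℝ) ≤ (2 / ((n : ℝ) + 1)) ^ 2 * ww α :=
        mul_nonneg (by positivity) (ww_pos α).le
      simpa using h0'

end DAhelp3

section DAhelp4

open Finsupp ContinuousLinearMap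

variable {d : ℕ} (DA : DruryArveson d)

lemma norm_sum_sq_orth {ι : Type*} (s : Finset ι) (v : ι → DA.H)
    (h : ∀ a ∈ s, ∀ b ∈ s, a ≠ b → (inner ℂ (v a) (v b) : ℂ) = 0) :
    ‖∑ a ∈ s, v a‖ ^ 2 = ∑ a ∈ s, ‖v a‖ ^ 2 := by
  have hC : (inner ℂ (∑ a ∈ s, v a) (∑ b ∈ s, v b) : ℂ) = ∑ a ∈ s, inner ℂ (v a) (v a) := by
    rw [sum_inner]
    refine Finset.sum_congr rfl fun a ha => ?_
    rw [inner_sum]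
    exact Finset.sum_eq_single_of_mem a ha fun b hb hba => h a ha b hb (Ne.symm hba)
  have h1 : (inner ℂ (∑ a ∈ s, v a) (∑ a ∈ s, v a) : ℂ) = ((‖∑ a ∈ s, v a‖ : ℝ) : ℂ) ^ 2 :=
    inner_self_eq_norm_sq_to_K _
  have h2 : ∀ a : ι, (inner ℂ (v a) (v a) : ℂ) = ((‖v a‖ : ℝ) : ℂ) ^ 2 := fun a =>
    inner_self_eq_norm_sq_to_K _
  rw [h1, Finset.sum_congr rfl (fun a _ => h2 a)] at hC
  exact_mod_cast hC

lemma emb_eq_sum (p : MvPolynomial (Fin d) ℂ) :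
    DA.emb p = ∑ β ∈ p.support, (coeff β p) • ee DA β := by
  conv_lhs => rw [p.as_sum]
  rw [map_sum]
  refine Finset.sum_congr rfl fun β _ => ?_
  rw [ee, ← map_smul]
  congr 1
  rw [MvPolynomial.smul_monomial, smul_eq_mul, mul_one]

lemma cc_ne_zero_pos {i j : Fin d} (hij : i ≠ j) {α : Fin d →₀ ℕ}
    (h : cc i j α ≠ 0) : 1 ≤ α i := by
  by_contra hcon
  have h0 : α i = 0 := by omega
  apply h
  rw [cc, h0, Finsupp.single_apply, if_neg (Ne.symm hij)]
  simp

lemma sig_inj {i j : Fin d} {a b : Fin d →₀ ℕ} (ha : cc i j a ≠ 0) (hb : cc i j b ≠ 0)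
    (hab : a ≠ b) : a + single j 1 - single i 1 ≠ b + single j 1 - single i 1 := by
  by_cases hij : i = j
  · subst hij
    rw [add_tsub_cancel_right, add_tsub_cancel_right]
    exact hab
  · intro hcon
    apply hab
    have hA : single i 1 ≤ a + single j 1 := by
      rw [Finsupp.single_le_iff, Finsupp.add_apply]
      have := cc_ne_zero_pos hij ha
      omega
    have hB : single i 1 ≤ b + single j 1 := by
      rw [Finsupp.single_le_iff, Finsupp.add_apply]
      have := cc_ne_zero_pos hij hb
      omega
    have : a + single j 1 = b + single j 1 := by
      have := congrArg (· + single i 1) hcon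
      simpa [tsub_add_cancel_of_le hA, tsub_add_cancel_of_le hB] using this
    exact add_right_cancel this

lemma key_ineq2 {i j : Fin d} {α : Fin d →₀ ℕ} {N : ℕ} (hα : N + 1 ≤ ∑ m, α m) :
    (cc i j α) ^ 2 * ww (α + single j 1 - single i 1)
      ≤ (2 / ((N : ℝ) + 2)) ^ 2 * ww α := by
  refine le_trans (key_ineq i j α (by omega)) ?_
  have hle : 2 / (((∑ m, α m : ℕ) : ℝ) + 1) ≤ 2 / ((N : ℝ) + 2) := by
    have hcast : ((N : ℝ) + 2) ≤ ((∑ m, α m : ℕ) : ℝ) + 1 := by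
      have : (N + 1 : ℝ) ≤ ((∑ m, α m : ℕ) : ℝ) := by exact_mod_cast hα
      linarith
    apply div_le_div_of_nonneg_left (by norm_num) (by positivity) hcast
  exact mul_le_mul_of_nonneg_right
    (pow_le_pow_left₀ (by positivity) hle 2) (ww_pos α).le

lemma norm_T_high (i j : Fin d) (N : ℕ) (q : MvPolynomial (Fin d) ℂ)
    (hq : ∀ α ∈ q.support, N + 1 ≤ ∑ m, α m) :
    ‖(ContinuousLinearMap.adjoint (DA.shift i) ∘L DA.shift j
        - DA.shift j ∘L ContinuousLinearMap.adjoint (DA.shift i)) (DA.emb q)‖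
      ≤ (2 / ((N : ℝ) + 2)) * ‖DA.emb q‖ := by
  set R : ℝ := 2 / ((N : ℝ) + 2) with hR
  have hR0 : 0 ≤ R := by positivity
  rw [emb_eq_sum, map_sum]
  simp only [map_smul, comm_ee]
  -- LHS squared
  have hL : ‖∑ a ∈ q.support, coeff a q • (((cc i j a : ℝ) : ℂ) • ee DA (a + single j 1 - single i 1))‖ ^ 2
      = ∑ a ∈ q.support, ‖coeff a q • (((cc i j a : ℝ) : ℂ) • ee DA (a + single j 1 - single i 1))‖ ^ 2 := by
    apply norm_sum_sq_orth
    intro a ha b hb hab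
    simp only [inner_smul_left, inner_smul_right]
    by_cases hca : cc i j a = 0
    · simp [hca]
    by_cases hcb : cc i j b = 0
    · simp [hcb]
    rw [inner_ee, if_neg (sig_inj hca hcb hab)]
    ring
  have hRt : ‖∑ a ∈ q.support, coeff a q • ee DA a‖ ^ 2
      = ∑ a ∈ q.support, ‖coeff a q • ee DA a‖ ^ 2 := by
    apply norm_sum_sq_orth
    intro a ha b hb hab
    rw [inner_smul_left, inner_smul_right, inner_ee, if_neg hab]
    ring
  have hsq : ‖∑ a ∈ q.support, coeff a q • (((cc i j a : ℝ) : ℂ) • ee DA (a + single j 1 - single i 1))‖ ^ 2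
      ≤ (R * ‖∑ a ∈ q.support, coeff a q • ee DA a‖) ^ 2 := by
    rw [hL, mul_pow, hRt, Finset.mul_sum]
    apply Finset.sum_le_sum
    intro a ha
    rw [norm_smul, norm_smul, norm_smul, mul_pow, mul_pow, mul_pow]
    rw [norm_ee_sq, norm_ee_sq]
    have hkey := key_ineq2 (i := i) (j := j) (hq a ha)
    have hcc : ‖((cc i j a : ℝ) : ℂ)‖ ^ 2 = (cc i j a) ^ 2 := by
      rw [Complex.norm_real, Real.norm_eq_abs, sq_abs]
    rw [hcc]
    calc ‖coeff a q‖ ^ 2 * ((cc i j a) ^ 2 * ww (a + single j 1 - single i 1))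
        ≤ ‖coeff a q‖ ^ 2 * (R ^ 2 * ww a) := by
          apply mul_le_mul_of_nonneg_left _ (by positivity)
          rw [hR]
          exact hkey
      _ = R ^ 2 * (‖coeff a q‖ ^ 2 * ww a) := by ring
  have h1 : (0:ℝ) ≤ ‖∑ a ∈ q.support, coeff a q • (((cc i j a : ℝ) : ℂ) • ee DA (a + single j 1 - single i 1))‖ := norm_nonneg _
  have h2 : (0:ℝ) ≤ R * ‖∑ a ∈ q.support, coeff a q • ee DA a‖ := by positivity
  exact (pow_le_pow_iff_left₀ h1 h2 (by norm_num)).mp hsq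

end DAhelp4

section DAhelp5

open Finsupp ContinuousLinearMap

variable {d : ℕ} (DA : DruryArveson d)

def lowSet (d N : ℕ) : Set (Fin d →₀ ℕ) := {α | ∑ m, α m ≤ N}

lemma lowSet_inj (N : ℕ) : Function.Injective
    (fun (α : lowSet d N) (k : Fin d) =>
      (⟨α.1 k, by
        have h1 : α.1 k ≤ ∑ m, α.1 m := alpha_le_sum _ k
        have h2 : ∑ m, α.1 m ≤ N := α.2
        omega⟩ : Fin (N + 1))) := by
  intro a b hab
  apply Subtype.ext
  apply Finsupp.ext
  intro k
  exact congrArg Fin.val (congrFun hab k)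

lemma lowSet_finite (N : ℕ) : (lowSet d N).Finite := by
  haveI : Finite (lowSet d N) := Finite.of_injective _ (lowSet_inj (d := d) N)
  exact Set.toFinite _

lemma card_lowSet (N : ℕ) : Cardinal.mk (lowSet d N) ≤ ((N + 1) ^ d : ℕ) := by
  calc Cardinal.mk (lowSet d N) ≤ Cardinal.mk (Fin d → Fin (N + 1)) :=
        Cardinal.mk_le_of_injective (lowSet_inj (d := d) N)
    _ = ((N + 1) ^ d : ℕ) := by
        rw [Cardinal.mk_fintype]
        congr 1
        simp [Fintype.card_fun]

def EN (N : ℕ) : Submodule ℂ DA.H := Submodule.span ℂ (ee DA '' lowSet d N)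

lemma EN_findim (N : ℕ) : FiniteDimensional ℂ (EN DA N) :=
  FiniteDimensional.span_of_finite ℂ ((lowSet_finite N).image _)

lemma mem_orth_span {S : Set DA.H} {x : DA.H} (h : ∀ u ∈ S, (inner ℂ u x : ℂ) = 0) :
    x ∈ (Submodule.span ℂ S)ᗮ := by
  rw [Submodule.mem_orthogonal]
  intro u hu
  induction hu using Submodule.span_induction with
  | mem u hu => exact h u hu
  | zero => simp
  | add u v _ _ hu hv => rw [inner_add_left, hu, hv, add_zero]
  | smul c u _ hu => rw [inner_smul_left, hu, mul_zero]

lemma emb_high_mem_orth (N : ℕ) (q : MvPolynomial (Fin d) ℂ)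
    (hq : ∀ α ∈ q.support, N + 1 ≤ ∑ m, α m) :
    DA.emb q ∈ (EN DA N)ᗮ := by
  apply mem_orth_span
  rintro u ⟨β, hβ, rfl⟩
  rw [emb_eq_sum, inner_sum]
  apply Finset.sum_eq_zero
  intro α hα
  rw [inner_smul_right, inner_ee, if_neg, mul_zero]
  intro hcon
  subst hcon
  have h1 := hq β hα
  have h2 : ∑ m, β m ≤ N := hβ
  omega

/-- the core estimate : the commutator is small on the orthocomplement of `EN`. -/
lemma core_est (i j : Fin d) (N : ℕ) (x : DA.H) (hx : x ∈ (EN DA N)ᗮ) :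
    ‖(ContinuousLinearMap.adjoint (DA.shift i) ∘L DA.shift j
        - DA.shift j ∘L ContinuousLinearMap.adjoint (DA.shift i)) x‖
      ≤ (2 / ((N : ℝ) + 2)) * ‖x‖ := by
  classical
  set T := ContinuousLinearMap.adjoint (DA.shift i) ∘L DA.shift j
        - DA.shift j ∘L ContinuousLinearMap.adjoint (DA.shift i) with hT
  set R : ℝ := 2 / ((N : ℝ) + 2) with hR
  have hR0 : 0 ≤ R := by positivity
  by_contra hcon
  push_neg at hcon
  set ε : ℝ := ‖T x‖ - R * ‖x‖ with hε
  have hεpos : 0 < ε := by simp only [hε]; linarith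
  set δ : ℝ := ε / (‖T‖ + R + 1) with hδ
  have hδpos : 0 < δ := by positivity
  obtain ⟨p, hp⟩ := DA.denseRange.exists_dist_lt x hδpos
  rw [dist_comm, dist_eq_norm] at hp
  rw [show DA.emb p - x = -(x - DA.emb p) by abel, norm_neg] at hp
  -- split p into low and high parts
  set s := p.support.filter (fun α => N + 1 ≤ ∑ m, α m) with hs
  set qh : MvPolynomial (Fin d) ℂ := ∑ α ∈ s, monomial α (coeff α p) with hqh
  set ql : MvPolynomial (Fin d) ℂ :=
    ∑ α ∈ p.support.filter (fun α => ¬ (N + 1 ≤ ∑ m, α m)), monomial α (coeff α p) with hql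
  have hqsum : qh + ql = p := by
    rw [hqh, hql, hs, Finset.sum_filter_add_sum_filter_not]
    exact p.support_sum_monomial_coeff
  have hql_mem : DA.emb ql ∈ EN DA N := by
    rw [hql, map_sum]
    apply Submodule.sum_mem
    intro α hα
    have hmon : DA.emb (monomial α (coeff α p)) = (coeff α p) • ee DA α := by
      rw [ee, ← map_smul]
      congr 1
      rw [MvPolynomial.smul_monomial, smul_eq_mul, mul_one]
    rw [hmon]
    apply Submodule.smul_mem
    apply Submodule.subset_span
    refine ⟨α, ?_, rfl⟩
    have := (Finset.mem_filter.mp hα).2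
    simpa [lowSet] using by omega
  have hqh_supp : ∀ α ∈ qh.support, N + 1 ≤ ∑ m, α m := by
    intro α hα
    rw [hqh] at hα
    have hsub := MvPolynomial.support_sum (s := s)
      (f := fun β => monomial β (coeff β p)) hα
    obtain ⟨β, hβ, hαβ⟩ := Finset.mem_biUnion.mp hsub
    have hβα : α = β := by
      by_cases hz : coeff β p = 0
      · rw [MvPolynomial.support_monomial, if_pos hz] at hαβ
        exact absurd hαβ (Finset.notMem_empty α)
      · rw [MvPolynomial.support_monomial, if_neg hz] at hαβ
        exact Finset.mem_singleton.mp hαβ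
    subst hβα
    exact (Finset.mem_filter.mp hβ).2
  have hhigh : DA.emb qh ∈ (EN DA N)ᗮ := emb_high_mem_orth DA N qh hqh_supp
  have hdiff : x - DA.emb qh ∈ (EN DA N)ᗮ := Submodule.sub_mem _ hx hhigh
  have hxq : ‖x - DA.emb qh‖ ≤ ‖x - DA.emb p‖ := by
    have hdecomp : x - DA.emb p = (x - DA.emb qh) - DA.emb ql := by
      rw [← hqsum, map_add]
      abel
    have hinner : (inner ℂ (x - DA.emb qh) (DA.emb ql) : ℂ) = 0 :=
      Submodule.inner_left_of_mem_orthogonal hql_mem hdiff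
    have hsq : ‖x - DA.emb p‖ ^ 2
        = ‖x - DA.emb qh‖ ^ 2 + ‖DA.emb ql‖ ^ 2 := by
      rw [hdecomp, @norm_sub_sq ℂ, hinner]
      simp
    nlinarith [norm_nonneg (x - DA.emb qh), norm_nonneg (x - DA.emb p),
      sq_nonneg ‖DA.emb ql‖]
  have h1 : ‖x - DA.emb qh‖ < δ := lt_of_le_of_lt hxq hp
  have h2 : ‖DA.emb qh‖ ≤ ‖x‖ + δ := by
    calc ‖DA.emb qh‖ = ‖x - (x - DA.emb qh)‖ := by rw [sub_sub_cancel]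
      _ ≤ ‖x‖ + ‖x - DA.emb qh‖ := norm_sub_le _ _
      _ ≤ ‖x‖ + δ := by linarith
  have h3 := norm_T_high DA i j N qh hqh_supp
  rw [← hT, ← hR] at h3
  have hTx : ‖T x‖ ≤ ‖T‖ * δ + R * (‖x‖ + δ) := by
    have hsplit : T x = T (x - DA.emb qh) + T (DA.emb qh) := by
      rw [map_sub]
      abel
    calc ‖T x‖ ≤ ‖T (x - DA.emb qh)‖ + ‖T (DA.emb qh)‖ := by
          rw [hsplit]; exact norm_add_le _ _
      _ ≤ ‖T‖ * ‖x - DA.emb qh‖ + R * ‖DA.emb qh‖ :=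
          add_le_add (T.le_opNorm _) h3
      _ ≤ ‖T‖ * δ + R * (‖x‖ + δ) := by
          apply add_le_add
          · exact mul_le_mul_of_nonneg_left h1.le (norm_nonneg (T : DA.H →L[ℂ] DA.H))
          · exact mul_le_mul_of_nonneg_left h2 hR0
  have hδe : δ * (‖T‖ + R + 1) = ε := by
    rw [hδ]
    field_simp
  have hexpand : ‖T‖ * δ + R * (‖x‖ + δ) = R * ‖x‖ + δ * (‖T‖ + R) := by ring
  have hεx : ε = ‖T x‖ - R * ‖x‖ := hε
  nlinarith [hδpos]

end DAhelp5

section DAhelp6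

open Finsupp ContinuousLinearMap

variable {d : ℕ} (DA : DruryArveson d)

lemma approx_nonneg {H K : Type*} [NormedAddCommGroup H] [NormedAddCommGroup K]
    [NormedSpace ℂ H] [NormedSpace ℂ K] (T : H →L[ℂ] K) (n : ℕ) :
    0 ≤ approxNumber T n := by
  apply Real.sInf_nonneg
  rintro c ⟨F, -, rfl⟩
  exact norm_nonneg _

set_option maxHeartbeats 1000000 in
lemma approx_le (i j : Fin d) (N n : ℕ) (hn : (N + 1) ^ d ≤ n) :
    approxNumber (ContinuousLinearMap.adjoint (DA.shift i) ∘L DA.shift j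
        - DA.shift j ∘L ContinuousLinearMap.adjoint (DA.shift i)) n
      ≤ 2 / ((N : ℝ) + 2) := by
  classical
  haveI hFD : FiniteDimensional ℂ (EN DA N) := EN_findim DA N
  haveI : CompleteSpace (EN DA N) := FiniteDimensional.complete ℂ _
  set T := ContinuousLinearMap.adjoint (DA.shift i) ∘L DA.shift j
        - DA.shift j ∘L ContinuousLinearMap.adjoint (DA.shift i) with hT
  set P : DA.H →L[ℂ] DA.H :=
    (EN DA N).subtypeL ∘L (Submodule.orthogonalProjection (EN DA N)) with hP
  set F := T ∘L P with hF
  have hrank : Module.rank ℂ (LinearMap.range (F : DA.H →ₗ[ℂ] DA.H)) ≤ (n : Cardinal) := by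
    have hcomp : (F : DA.H →ₗ[ℂ] DA.H)
        = (T : DA.H →ₗ[ℂ] DA.H).comp (P : DA.H →ₗ[ℂ] DA.H) :=
      ContinuousLinearMap.toLinearMap_comp T P
    have hle : LinearMap.range (P : DA.H →ₗ[ℂ] DA.H) ≤ EN DA N := by
      rintro y ⟨x, rfl⟩
      exact ((Submodule.orthogonalProjection (EN DA N)) x).2
    calc Module.rank ℂ (LinearMap.range (F : DA.H →ₗ[ℂ] DA.H))
        = LinearMap.rank ((T : DA.H →ₗ[ℂ] DA.H).comp (P : DA.H →ₗ[ℂ] DA.H)) := by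
          rw [LinearMap.rank, hcomp]
      _ ≤ LinearMap.rank (P : DA.H →ₗ[ℂ] DA.H) := LinearMap.rank_comp_le_right _ _
      _ ≤ Module.rank ℂ (EN DA N) := Submodule.rank_mono hle
      _ ≤ Cardinal.mk (ee DA '' lowSet d N) := rank_span_le _
      _ ≤ Cardinal.mk (lowSet d N) := Cardinal.mk_image_le
      _ ≤ (((N + 1) ^ d : ℕ) : Cardinal.{0}) := card_lowSet N
      _ ≤ (n : Cardinal.{0}) := by exact_mod_cast (Nat.cast_le (α := Cardinal.{0})).mpr hn
  have hTF : ‖T - F‖ ≤ 2 / ((N : ℝ) + 2) := by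
    apply ContinuousLinearMap.opNorm_le_bound _ (by positivity)
    intro x
    have hfx : (T - F) x = T (x - P x) := by
      rw [ContinuousLinearMap.sub_apply, hF, ContinuousLinearMap.comp_apply, ← map_sub]
    rw [hfx]
    have hmem : x - P x ∈ (EN DA N)ᗮ := by
      have := Submodule.sub_starProjection_mem_orthogonal (K := EN DA N) x
      exact this
    have hcore := core_est DA i j N (x - P x) hmem
    rw [← hT] at hcore
    refine le_trans hcore ?_
    apply mul_le_mul_of_nonneg_left _ (by positivity)
    have hPmem : P x ∈ EN DA N := by
      have := ((Submodule.orthogonalProjection (EN DA N)) x).2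
      simpa [hP] using this
    have hortho : (inner ℂ (P x) (x - P x) : ℂ) = 0 :=
      Submodule.inner_right_of_mem_orthogonal hPmem hmem
    have hpyth : ‖x‖ ^ 2 = ‖P x‖ ^ 2 + ‖x - P x‖ ^ 2 := by
      have hxsplit : x = P x + (x - P x) := by abel
      conv_lhs => rw [hxsplit]
      rw [@norm_add_sq ℂ, hortho]
      simp
    nlinarith [norm_nonneg (P x), norm_nonneg x, norm_nonneg (x - P x)]
  have hbdd : BddBelow {c : ℝ | ∃ F' : DA.H →L[ℂ] DA.H,
      Module.rank ℂ (LinearMap.range (F' : DA.H →ₗ[ℂ] DA.H)) ≤ (n : Cardinal)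
        ∧ c = ‖T - F'‖} := by
    refine ⟨0, ?_⟩
    rintro c ⟨F', -, rfl⟩
    exact norm_nonneg _
  exact le_trans (csInf_le hbdd ⟨F, hrank, rfl⟩) hTF

end DAhelp6

/-- The commutators `[S_i^*, S_j]` of the `d`-shift on the
Drury–Arveson space lie in the Schatten `p`-class for every `p > d`. -/
theorem shift_commutators_schatten {d : ℕ} (DA : DruryArveson d)
    (p : ℝ) (hp : (d : ℝ) < p) (i j : Fin d) :
    MemSchatten p
      (ContinuousLinearMap.adjoint (DA.shift i) ∘L DA.shift j
        - DA.shift j ∘L ContinuousLinearMap.adjoint (DA.shift i)) := by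
  classical
  have hd : 0 < d := i.pos
  have hd1 : (1:ℝ) ≤ (d:ℝ) := by exact_mod_cast hd
  have hp0 : 0 < p := by linarith
  set T := ContinuousLinearMap.adjoint (DA.shift i) ∘L DA.shift j
        - DA.shift j ∘L ContinuousLinearMap.adjoint (DA.shift i) with hT
  rw [MemSchatten]
  have hdR : (0:ℝ) < (d:ℝ) := by linarith
  have key : ∀ n : ℕ, 1 ≤ n → approxNumber T n ≤ 2 / ((n : ℝ) ^ ((d : ℝ)⁻¹)) := by
    intro n hn
    set N := Nat.findGreatest (fun m => (m + 1) ^ d ≤ n) n with hN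
    have hP0 : (0 + 1) ^ d ≤ n := by simpa using hn
    have hPN : (N + 1) ^ d ≤ n := by
      have hsp := Nat.findGreatest_spec (P := fun m => (m + 1) ^ d ≤ n) (Nat.zero_le n) hP0
      rwa [← hN] at hsp
    have hnot : ¬ ((N + 1 + 1) ^ d ≤ n) := by
      intro hcon
      have h1 : N + 1 + 1 ≤ (N + 1 + 1) ^ d := Nat.le_self_pow hd.ne' _
      exact (Nat.findGreatest_is_greatest (Nat.lt_succ_self N) (by omega)) hcon
    have happ := approx_le DA i j N n hPN
    rw [← hT] at happ
    refine le_trans happ ?_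
    have hnpos : (0:ℝ) < (n:ℝ) := by exact_mod_cast hn
    have hrpos : (0:ℝ) < (n:ℝ) ^ ((d:ℝ)⁻¹) := Real.rpow_pos_of_pos hnpos _
    have hlt : (n : ℝ) < ((N:ℝ) + 2) ^ (d : ℕ) := by
      have h2 : n < (N + 1 + 1) ^ d := Nat.lt_of_not_le hnot
      have h3 : (n : ℝ) < (((N + 1 + 1) ^ d : ℕ) : ℝ) := by exact_mod_cast h2
      refine lt_of_lt_of_le h3 (le_of_eq ?_)
      push_cast
      ring
    have hroot : (n : ℝ) ^ ((d:ℝ)⁻¹) ≤ (N:ℝ) + 2 := by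
      have h1 := Real.rpow_le_rpow (le_of_lt hnpos) hlt.le
        (by positivity : (0:ℝ) ≤ (d:ℝ)⁻¹)
      rwa [← Real.rpow_natCast ((N:ℝ) + 2) d, ← Real.rpow_mul (by positivity),
        mul_inv_cancel₀ (ne_of_gt hdR), Real.rpow_one] at h1
    exact div_le_div_of_nonneg_left (by norm_num) hrpos hroot
  apply (summable_nat_add_iff 1).mp
  have hsum : Summable (fun n : ℕ => (2 ^ p) * (((n + 1 : ℕ) : ℝ) ^ (p / (d:ℝ)))⁻¹) := by
    apply Summable.mul_left
    have hsum0 : Summable (fun n : ℕ => ((n : ℝ) ^ (p / (d:ℝ)))⁻¹) :=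
      Real.summable_nat_rpow_inv.mpr ((one_lt_div hdR).mpr hp)
    exact (summable_nat_add_iff 1).mpr hsum0
  apply Summable.of_nonneg_of_le _ _ hsum
  · intro n
    exact Real.rpow_nonneg (approx_nonneg _ _) p
  · intro n
    have hb := key (n + 1) (by omega)
    have ha0 := approx_nonneg T (n + 1)
    have h1 : approxNumber T (n + 1) ^ p ≤ (2 / (((n + 1 : ℕ) : ℝ) ^ ((d:ℝ)⁻¹))) ^ p :=
      Real.rpow_le_rpow ha0 hb hp0.le
    refine le_trans h1 (le_of_eq ?_)
    have hpos : (0:ℝ) < ((n + 1 : ℕ) : ℝ) := by exact_mod_cast Nat.succ_pos n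
    rw [Real.div_rpow (by norm_num) (Real.rpow_nonneg hpos.le _)]
    rw [← Real.rpow_mul hpos.le, inv_mul_eq_div, div_eq_mul_inv]

end
end

section
/- Let H and K be Hilbert spaces with orthogonal direct sum decompositions H = ⊕_{n=0}^∞ H_n and K = ⊕_{n=0}^∞ K_n into closed subspaces, with each H_n finite-dimensional. Let T : H → K be a bounded linear operator that is graded, i.e. T(H_n) ⊆ K_n for all n. Suppose there exist N ∈ ℕ and δ > 0 such that ‖Tv‖ ≥ δ‖v‖ for all v ∈ H_n and all n ≥ N. Then T has closed range. -/
open scoped InnerProductSpace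
open MvPolynomial Module

noncomputable section

/-- The sum of a closed submodule and a finite-dimensional submodule is closed. -/
lemma isClosed_sup_of_finiteDimensional {E : Type*} [NormedAddCommGroup E] [NormedSpace ℂ E]
    (C F : Submodule ℂ E) (hC : IsClosed (C : Set E)) [FiniteDimensional ℂ ↥F] :
    IsClosed ((C ⊔ F : Submodule ℂ E) : Set E) := by
  haveI : IsClosed (C : Set E) := hC
  have hmkQ : Continuous C.mkQ :=
    (C.mkQ.mkContinuous 1 (fun x => by
      simpa using Submodule.Quotient.norm_mk_le C x)).continuous
  have hFQ : IsClosed ((F.map C.mkQ : Submodule ℂ (E ⧸ C)) : Set (E ⧸ C)) :=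
    (F.map C.mkQ).closed_of_finiteDimensional
  have hset : ((C ⊔ F : Submodule ℂ E) : Set E) = C.mkQ ⁻¹' ((F.map C.mkQ) : Set (E ⧸ C)) := by
    rw [← Submodule.comap_map_mkQ]
    rfl
  rw [hset]
  exact hFQ.preimage hmkQ

/-- A graded bounded operator between Hilbert spaces with orthogonal
graded decompositions, which is uniformly bounded below on all sufficiently high graded
pieces (the lower pieces being finite-dimensional), has closed range. -/
theorem closed_range_of_graded_bounded_below {H K : Type*}
    [NormedAddCommGroup H] [InnerProductSpace ℂ H] [CompleteSpace H]
    [NormedAddCommGroup K] [InnerProductSpace ℂ K] [CompleteSpace K]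
    (Hn : ℕ → Submodule ℂ H) (Kn : ℕ → Submodule ℂ K)
    (hHorth : ∀ m n, m ≠ n → ∀ x ∈ Hn m, ∀ y ∈ Hn n, (inner ℂ x y : ℂ) = 0)
    (hKorth : ∀ m n, m ≠ n → ∀ x ∈ Kn m, ∀ y ∈ Kn n, (inner ℂ x y : ℂ) = 0)
    (hHfd : ∀ n, FiniteDimensional ℂ ↥(Hn n))
    (hKcl : ∀ n, IsClosed ((Kn n : Set K)))
    (hHdense : (⨆ n, Hn n).topologicalClosure = ⊤)
    (hKdense : (⨆ n, Kn n).topologicalClosure = ⊤)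
    (T : H →L[ℂ] K) (hgraded : ∀ n, ∀ v ∈ Hn n, T v ∈ Kn n)
    (N : ℕ) (δ : ℝ) (hδ : 0 < δ)
    (hbelow : ∀ n, N ≤ n → ∀ v ∈ Hn n, δ * ‖v‖ ≤ ‖T v‖) :
    IsClosed (Set.range T) := by
  classical
  -- Orthogonal families on the high graded pieces.
  have hVH : OrthogonalFamily ℂ (fun i : {n : ℕ // N ≤ n} => ↥(Hn i))
      (fun i => (Hn i).subtypeₗᵢ) := by
    intro i j hij v w
    exact hHorth i j (fun h => hij (Subtype.ext h)) v v.2 w w.2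
  have hVK : OrthogonalFamily ℂ (fun i : {n : ℕ // N ≤ n} => ↥(Kn i))
      (fun i => (Kn i).subtypeₗᵢ) := by
    intro i j hij v w
    exact hKorth i j (fun h => hij (Subtype.ext h)) v v.2 w w.2
  set E : Submodule ℂ H := ⨆ i : {n : ℕ // N ≤ n}, Hn i with hE
  -- `T` is bounded below on the algebraic sum of the high pieces.
  have keyE : ∀ v ∈ E, δ * ‖v‖ ≤ ‖T v‖ := by
    intro v hv
    obtain ⟨f, rfl⟩ := (Submodule.mem_iSup_iff_exists_dfinsupp' _ _).mp hv
    have hsum : (f.sum fun _ xi => (xi : H)) = ∑ i ∈ f.support, ((f i : H)) := rfl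
    rw [hsum]
    have h1 : ‖∑ i ∈ f.support, ((f i : H))‖ ^ 2 = ∑ i ∈ f.support, ‖f i‖ ^ 2 :=
      hVH.norm_sum (fun i => f i) f.support
    set g : ∀ i : {n : ℕ // N ≤ n}, ↥(Kn i) :=
      fun i => ⟨T (f i), hgraded i _ (f i).2⟩ with hg
    have h2 : ‖∑ i ∈ f.support, T ((f i : H))‖ ^ 2 = ∑ i ∈ f.support, ‖T ((f i : H))‖ ^ 2 := by
      have := hVK.norm_sum g f.support
      simpa [hg] using this
    have h3 : ∀ i ∈ f.support, (δ * ‖(f i : H)‖) ^ 2 ≤ ‖T ((f i : H))‖ ^ 2 := by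
      intro i _
      have := hbelow i i.2 _ (f i).2
      have h0 : (0:ℝ) ≤ δ * ‖(f i : H)‖ := by positivity
      exact pow_le_pow_left₀ h0 this 2
    have hsq : (δ * ‖∑ i ∈ f.support, ((f i : H))‖) ^ 2
        ≤ ‖T (∑ i ∈ f.support, ((f i : H)))‖ ^ 2 := by
      rw [map_sum, h2, mul_pow, h1, Finset.mul_sum]
      refine Finset.sum_le_sum fun i hi => ?_
      have := h3 i hi
      calc δ ^ 2 * ‖f i‖ ^ 2 = (δ * ‖(f i : H)‖) ^ 2 := by
            rw [mul_pow]; norm_cast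
        _ ≤ ‖T ((f i : H))‖ ^ 2 := this
    have := Real.sqrt_le_sqrt hsq
    rwa [Real.sqrt_sq (by positivity), Real.sqrt_sq (norm_nonneg _)] at this
  set Ec : Submodule ℂ H := E.topologicalClosure with hEc
  -- Extend the lower bound to the closure.
  have keyEc : ∀ v ∈ Ec, δ * ‖v‖ ≤ ‖T v‖ := by
    have hclS : IsClosed {v : H | δ * ‖v‖ ≤ ‖T v‖} := by
      apply isClosed_le
      · exact continuous_const.mul continuous_norm
      · exact T.continuous.norm
    intro v hv
    have hsub : (E : Set H) ⊆ {v : H | δ * ‖v‖ ≤ ‖T v‖} := fun x hx => keyE x hx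
    have := hclS.closure_subset_iff.mpr hsub
    exact this hv
  haveI : CompleteSpace ↥Ec := E.isClosed_topologicalClosure.completeSpace_coe
  -- `T` restricted to the closure has closed image.
  set S : ↥Ec →L[ℂ] K := T.comp Ec.subtypeL with hS
  have hanti : AntilipschitzWith (⟨δ, hδ.le⟩ : NNReal)⁻¹ S := by
    apply S.antilipschitz_of_bound
    intro x
    have hkey : δ * ‖(x : H)‖ ≤ ‖T (x : H)‖ := keyEc x x.2
    change ‖x‖ ≤ δ⁻¹ * ‖S x‖
    have hnx : ‖x‖ = ‖(x : H)‖ := rfl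
    have hSx : ‖S x‖ = ‖T (x : H)‖ := rfl
    rw [hnx, hSx, inv_mul_eq_div, le_div_iff₀ hδ, mul_comm]
    exact hkey
  have hclosedIm : IsClosed (Set.range S) := hanti.isClosed_range S.uniformContinuous
  have him : Set.range S = ((Submodule.map (T : H →ₗ[ℂ] K) Ec : Submodule ℂ K) : Set K) := by
    ext y
    simp only [Set.mem_range, SetLike.mem_coe, Submodule.mem_map]
    constructor
    · rintro ⟨x, rfl⟩
      exact ⟨x, x.2, rfl⟩
    · rintro ⟨x, hx, rfl⟩
      exact ⟨⟨x, hx⟩, rfl⟩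
  -- The finite-dimensional low part.
  set F : Submodule ℂ H := ⨆ i : Fin N, Hn i with hF
  haveI : ∀ i : Fin N, FiniteDimensional ℂ ↥(Hn i) := fun i => hHfd i
  haveI : FiniteDimensional ℂ ↥F := Submodule.finiteDimensional_iSup _
  have htop : Ec ⊔ F = ⊤ := by
    have hsub : (⨆ n, Hn n) ≤ Ec ⊔ F := by
      refine iSup_le fun n => ?_
      rcases lt_or_ge n N with h | h
      · exact le_sup_of_le_right (le_iSup (fun i : Fin N => Hn i) ⟨n, h⟩)
      · exact le_sup_of_le_left
          ((le_iSup (fun i : {n : ℕ // N ≤ n} => (Hn i : Submodule ℂ H)) ⟨n, h⟩).trans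
            E.le_topologicalClosure)
    have hcl : IsClosed ((Ec ⊔ F : Submodule ℂ H) : Set H) :=
      isClosed_sup_of_finiteDimensional Ec F E.isClosed_topologicalClosure
    exact top_unique (hHdense ▸ Submodule.topologicalClosure_minimal _ hsub hcl)
  -- Put everything together.
  have hrange : Set.range ⇑T
      = ((Submodule.map (T : H →ₗ[ℂ] K) Ec ⊔ Submodule.map (T : H →ₗ[ℂ] K) F :
          Submodule ℂ K) : Set K) := by
    rw [← Submodule.map_sup, htop]
    ext y
    simp [Submodule.mem_map]
  rw [hrange]
  haveI : FiniteDimensional ℂ ↥(Submodule.map (T : H →ₗ[ℂ] K) F) :=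
    Module.Finite.map F (T : H →ₗ[ℂ] K)
  exact isClosed_sup_of_finiteDimensional _ _ (him ▸ hclosedIm)

end
end

section
/- Let H be a Hilbert space with an orthogonal direct sum decomposition H = ⊕_{n=0}^∞ H_n into finite-dimensional subspaces with dim H_n ≤ n^{d−1} for all sufficiently large n (for some fixed positive integer d). Let T be a bounded self-adjoint operator on H with T(H_n) ⊆ H_n for all n, and suppose there exist constants M > 0 and 0 ≤ c < 1 such that ‖(T − I)|_{H_n}‖ ≤ M c^n for all n. Then T − I is a trace class operator. -/
open scoped InnerProductSpace
open MvPolynomial Module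

noncomputable section

/-- Pythagoras for finite sums of pairwise orthogonal vectors. -/
lemma norm_sq_sum_orthogonal {H : Type*} [NormedAddCommGroup H] [InnerProductSpace ℂ H]
    {ι : Type*} (s : Finset ι) (v : ι → H)
    (h : ∀ i ∈ s, ∀ j ∈ s, i ≠ j → (inner ℂ (v i) (v j) : ℂ) = 0) :
    ‖∑ i ∈ s, v i‖ ^ 2 = ∑ i ∈ s, ‖v i‖ ^ 2 := by
  rw [← inner_self_eq_norm_sq (𝕜 := ℂ), sum_inner, map_sum]
  refine Finset.sum_congr rfl fun i hi => ?_
  rw [inner_sum, Finset.sum_eq_single_of_mem i hi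
    (fun j hj hne => h i hi j hj (Ne.symm hne)), inner_self_eq_norm_sq]

/-- finrank of a finite sup of finite-dimensional submodules is at most the sum. -/
lemma finrank_finset_sup_le {H : Type*} [NormedAddCommGroup H] [InnerProductSpace ℂ H]
    (Hn : ℕ → Submodule ℂ H) (hfd : ∀ n, FiniteDimensional ℂ ↥(Hn n)) (s : Finset ℕ) :
    finrank ℂ ↥(s.sup Hn) ≤ ∑ k ∈ s, finrank ℂ ↥(Hn k) := by
  haveI := hfd
  classical
  induction s using Finset.cons_induction with
  | empty => simp
  | cons a s ha ih =>
    rw [Finset.sup_cons, Finset.sum_cons]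
    refine le_trans (Submodule.finrank_add_le_finrank_add_finrank _ _) ?_
    omega

/-- `(n+2)^d * c^n` is summable for `0 ≤ c < 1`. -/
lemma summable_shifted_pow_mul_geometric (d : ℕ) {c : ℝ} (hc0 : 0 ≤ c) (hc1 : c < 1) :
    Summable fun n : ℕ => ((n : ℝ) + 2) ^ d * c ^ n := by
  have key : ∀ n : ℕ, ((n : ℝ) + 2) ^ d * c ^ n
      = ∑ k ∈ Finset.range (d + 1), ((d.choose k) * 2 ^ (d - k)) * ((n : ℝ) ^ k * c ^ n) := by
    intro n
    rw [add_pow, Finset.sum_mul]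
    refine Finset.sum_congr rfl fun k hk => ?_
    ring
  rw [funext key]
  have : ∀ (s : Finset ℕ), Summable (fun n : ℕ =>
      ∑ k ∈ s, ((d.choose k : ℝ) * 2 ^ (d - k)) * ((n : ℝ) ^ k * c ^ n)) := by
    intro s
    induction s using Finset.cons_induction with
    | empty => simpa using summable_zero
    | cons i s hi ih =>
      simp only [Finset.sum_cons]
      exact Summable.add ((summable_pow_mul_geometric_of_norm_lt_one (R := ℝ) i
        (by rwa [Real.norm_eq_abs, abs_of_nonneg hc0])).mul_left _) ih
  exact this _

/-- If a bounded self-adjoint graded operator `T` on a Hilbert space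
`H = ⊕ H_n` (with `dim H_n ≤ n^{d−1}` eventually) satisfies
`‖(T − I)|_{H_n}‖ ≤ M cⁿ` with `0 ≤ c < 1`, then `T − I` is trace class. -/
theorem traceClass_of_graded_geometric_bound {H : Type*} [NormedAddCommGroup H]
    [InnerProductSpace ℂ H] [CompleteSpace H]
    (Hn : ℕ → Submodule ℂ H)
    (horth : ∀ m n, m ≠ n → ∀ x ∈ Hn m, ∀ y ∈ Hn n, (inner ℂ x y : ℂ) = 0)
    (hfd : ∀ n, FiniteDimensional ℂ ↥(Hn n))
    (d : ℕ) (hd : 0 < d)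
    (hdim : ∀ᶠ n in Filter.atTop, Module.finrank ℂ ↥(Hn n) ≤ n ^ (d - 1))
    (hdense : (⨆ n, Hn n).topologicalClosure = ⊤)
    (T : H →L[ℂ] H) (hsa : IsSelfAdjoint T)
    (hgraded : ∀ n, ∀ v ∈ Hn n, T v ∈ Hn n)
    (M c : ℝ) (hM : 0 < M) (hc0 : 0 ≤ c) (hc1 : c < 1)
    (hb : ∀ n, ∀ v ∈ Hn n, ‖(T - 1) v‖ ≤ M * c ^ n * ‖v‖) :
    MemSchatten 1 (T - 1) := by
  classical
  haveI := hfd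
  set A : H →L[ℂ] H := T - 1 with hA
  have hAgr : ∀ n, ∀ v ∈ Hn n, A v ∈ Hn n := by
    intro n v hv
    have : A v = T v - v := by simp [hA]
    rw [this]
    exact Submodule.sub_mem _ (hgraded n v hv) hv
  -- basic facts about approximation numbers
  set a : ℕ → ℝ := approxNumber A with ha
  have hSdef : ∀ n : ℕ, a n = sInf {r : ℝ | ∃ F : H →L[ℂ] H,
      Module.rank ℂ (LinearMap.range (F : H →ₗ[ℂ] H)) ≤ (n : Cardinal) ∧ r = ‖A - F‖} := by
    intro n; rfl
  have hbdd : ∀ n : ℕ, BddBelow {r : ℝ | ∃ F : H →L[ℂ] H,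
      Module.rank ℂ (LinearMap.range (F : H →ₗ[ℂ] H)) ≤ (n : Cardinal) ∧ r = ‖A - F‖} := by
    intro n
    exact ⟨0, fun r ⟨F, _, hr⟩ => hr ▸ norm_nonneg _⟩
  have ha0 : ∀ n, 0 ≤ a n := by
    intro n
    rw [hSdef]
    exact Real.sInf_nonneg (fun r ⟨F, _, hr⟩ => hr ▸ norm_nonneg _)
  have hanti : Antitone a := by
    intro m n hmn
    rw [hSdef, hSdef]
    refine csInf_le_csInf (hbdd n) ⟨‖A - 0‖, 0, by simp, rfl⟩ ?_
    rintro r ⟨F, hF, hr⟩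
    exact ⟨F, hF.trans (Nat.cast_le.mpr hmn), hr⟩
  -- dimension bookkeeping
  obtain ⟨n₀, hn₀⟩ := Filter.eventually_atTop.mp hdim
  set A₀ : ℕ := ∑ k ∈ Finset.range n₀, finrank ℂ ↥(Hn k) with hA₀
  set g : ℕ → ℕ := fun N => A₀ + (N + 1) ^ d with hg
  have hgmono : Monotone g := by
    intro i j hij
    simp only [hg]
    exact Nat.add_le_add_left (Nat.pow_le_pow_left (by omega) d) _
  have hgself : ∀ n, n ≤ g n := by
    intro n
    have h1 : n + 1 ≤ (n + 1) ^ d := Nat.le_self_pow (by omega) _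
    simp only [hg]
    omega
  set K : ℕ → Submodule ℂ H := fun N => (Finset.range (N + 1)).sup Hn with hK
  have hKfd : ∀ N, FiniteDimensional ℂ ↥(K N) := fun N => inferInstance
  have hKrank : ∀ N, finrank ℂ ↥(K N) ≤ g N := by
    intro N
    refine le_trans (finrank_finset_sup_le Hn hfd _) ?_
    have h1 : ∀ k ∈ Finset.range (N + 1), finrank ℂ ↥(Hn k) ≤
        (if k < n₀ then finrank ℂ ↥(Hn k) else 0) + k ^ (d - 1) := by
      intro k _
      by_cases hk : k < n₀
      · simp [hk]
      · simp only [hk, if_false, zero_add]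
        exact hn₀ k (by omega)
    refine le_trans (Finset.sum_le_sum h1) ?_
    rw [Finset.sum_add_distrib]
    have h2 : ∑ k ∈ Finset.range (N + 1), (if k < n₀ then finrank ℂ ↥(Hn k) else 0) ≤ A₀ := by
      rw [hA₀]
      refine le_trans (Finset.sum_le_sum_of_ne_zero ?_) (Finset.sum_le_sum ?_)
      · intro k _ hk0
        simp only [Finset.mem_range]
        by_contra hknot
        simp [show ¬ k < n₀ by omega] at hk0
      · intro k _
        split <;> omega
    have h3 : ∑ k ∈ Finset.range (N + 1), k ^ (d - 1) ≤ (N + 1) ^ d := by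
      have : ∀ k ∈ Finset.range (N + 1), k ^ (d - 1) ≤ (N + 1) ^ (d - 1) := by
        intro k hk
        exact Nat.pow_le_pow_left (by simp at hk; omega) _
      refine le_trans (Finset.sum_le_card_nsmul _ _ _ this) ?_
      rw [smul_eq_mul, Finset.card_range]
      have hde : d - 1 + 1 = d := by omega
      rw [← hde, pow_succ]
      exact le_of_eq (mul_comm _ _)
    simp only [hg]
    omega
  -- orthogonality of the pieces
  have hHnOrtho : ∀ m n, m ≠ n → Hn m ⟂ Hn n := by
    intro m n hmn
    exact Submodule.isOrtho_iff_inner_eq.mpr (horth m n hmn)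
  have hKOrtho : ∀ N k, N < k → K N ⟂ Hn k := by
    intro N k hk
    rw [hK]
    simp only [Finset.sup_eq_iSup]
    rw [Submodule.isOrtho_iSup_left]
    intro j
    rw [Submodule.isOrtho_iSup_left]
    intro hj
    simp only [Finset.mem_range] at hj
    exact hHnOrtho j k (by omega)
  -- the tail subspaces
  set L : ℕ → Submodule ℂ H := fun N => ⨆ k : {k : ℕ // N < k}, Hn ↑k with hL
  have hLperpK : ∀ N, L N ≤ (K N)ᗮ := by
    intro N
    exact iSup_le fun k => Submodule.isOrtho_iff_le.mp ((hKOrtho N k k.2).symm)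
  -- the key norm bound on the algebraic tail
  have hkeyL : ∀ N, ∀ x ∈ L N, ‖A x‖ ≤ M * c ^ (N + 1) * ‖x‖ := by
    intro N x hx
    obtain ⟨f, hf, hsum⟩ := (Submodule.mem_iSup_iff_exists_finsupp _ x).mp hx
    have hxeq : x = ∑ i ∈ f.support, f i := by
      rw [← hsum]; rfl
    have hb' : 0 ≤ M * c ^ (N + 1) := by positivity
    have hsq : ‖A x‖ ^ 2 ≤ (M * c ^ (N + 1)) ^ 2 * ‖x‖ ^ 2 := by
      have hAx : A x = ∑ i ∈ f.support, A (f i) := by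
        rw [hxeq, map_sum]
      have hnx : ‖x‖ ^ 2 = ∑ i ∈ f.support, ‖f i‖ ^ 2 := by
        rw [hxeq]
        exact norm_sq_sum_orthogonal _ _ fun i _ j _ hij =>
          horth i j (fun e => hij (Subtype.coe_injective e)) _ (hf i) _ (hf j)
      have hnAx : ‖A x‖ ^ 2 = ∑ i ∈ f.support, ‖A (f i)‖ ^ 2 := by
        rw [hAx]
        exact norm_sq_sum_orthogonal _ _ fun i _ j _ hij =>
          horth i j (fun e => hij (Subtype.coe_injective e)) _
            (hAgr i _ (hf i)) _ (hAgr j _ (hf j))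
      rw [hnAx, hnx, Finset.mul_sum]
      refine Finset.sum_le_sum fun i _ => ?_
      have h1 : ‖A (f i)‖ ≤ M * c ^ (i : ℕ) * ‖f i‖ := hb i _ (hf i)
      have h2 : c ^ (i : ℕ) ≤ c ^ (N + 1) :=
        pow_le_pow_of_le_one hc0 hc1.le i.2
      have h3 : ‖A (f i)‖ ≤ M * c ^ (N + 1) * ‖f i‖ := by
        refine h1.trans ?_
        have := mul_le_mul_of_nonneg_left h2 hM.le
        exact mul_le_mul_of_nonneg_right this (norm_nonneg _)
      calc ‖A (f i)‖ ^ 2 ≤ (M * c ^ (N + 1) * ‖f i‖) ^ 2 :=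
            pow_le_pow_left₀ (norm_nonneg _) h3 2
        _ = (M * c ^ (N + 1)) ^ 2 * ‖f i‖ ^ 2 := by ring
    have := Real.sqrt_le_sqrt hsq
    rwa [Real.sqrt_sq (norm_nonneg _), show (M * c ^ (N + 1)) ^ 2 * ‖x‖ ^ 2
      = (M * c ^ (N + 1) * ‖x‖) ^ 2 by ring, Real.sqrt_sq (by positivity)] at this
  -- extend to the closure
  have hkeyCl : ∀ N, ∀ x ∈ (L N).topologicalClosure, ‖A x‖ ≤ M * c ^ (N + 1) * ‖x‖ := by
    intro N x hx
    have hclosed : IsClosed {y : H | ‖A y‖ ≤ M * c ^ (N + 1) * ‖y‖} := by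
      apply isClosed_le
      · exact (A.continuous.norm)
      · exact (continuous_const.mul continuous_norm)
    have hsub : (L N : Set H) ⊆ {y : H | ‖A y‖ ≤ M * c ^ (N + 1) * ‖y‖} :=
      fun y hy => hkeyL N y hy
    have hx' : x ∈ closure (L N : Set H) := by
      rw [← Submodule.topologicalClosure_coe]
      exact hx
    exact closure_minimal hsub hclosed hx'
  -- the orthogonal complement of K N is inside the closure of L N
  have hperp : ∀ N, (K N)ᗮ ≤ (L N).topologicalClosure := by
    intro N
    rw [← Submodule.orthogonal_orthogonal_eq_closure]
    refine Submodule.orthogonal_le ?_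
    -- (L N)ᗮ ≤ K N
    intro w hw
    have hKw : ((K N).orthogonalProjectionOnto w : H) ∈ K N := Submodule.coe_mem _
    set w' : H := w - (K N).orthogonalProjectionOnto w with hw'
    have hw'K : w' ∈ (K N)ᗮ := Submodule.sub_starProjection_mem_orthogonal (K := K N) w
    have hw'L : w' ∈ (L N)ᗮ := by
      refine Submodule.sub_mem _ hw ?_
      have hKL : K N ≤ (L N)ᗮ := by
        rw [← Submodule.isOrtho_iff_le]
        rw [hL]
        rw [Submodule.isOrtho_iSup_right]
        intro k
        exact hKOrtho N k k.2
      exact hKL hKw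
    have hw'0 : w' = 0 := by
      have hmem : w' ∈ (⨆ n, Hn n)ᗮ := by
        rw [Submodule.mem_orthogonal]
        intro u hu
        induction hu using Submodule.iSup_induction' with
        | mem n v hv =>
          by_cases hn : n ≤ N
          · have : v ∈ K N := by
              rw [hK]
              exact Finset.le_sup (f := Hn) (Finset.mem_range.mpr (by omega)) hv
            exact (Submodule.mem_orthogonal _ _).mp hw'K v this
          · have : v ∈ L N := le_iSup (fun k : {k : ℕ // N < k} => Hn ↑k) ⟨n, by omega⟩ hv
            exact (Submodule.mem_orthogonal _ _).mp hw'L v this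
        | zero => exact inner_zero_left _
        | add u v _ _ hu hv => rw [inner_add_left, hu, hv, add_zero]
      have hbot : (⨆ n, Hn n)ᗮ = ⊥ := by
        have h1 : (⨆ n, Hn n)ᗮᗮ = ⊤ := by
          rw [Submodule.orthogonal_orthogonal_eq_closure, hdense]
        rw [← Submodule.triorthogonal_eq_orthogonal, h1,
          Submodule.top_orthogonal_eq_bot]
      rw [hbot] at hmem
      simpa using hmem
    have : w = ((K N).orthogonalProjectionOnto w : H) := by
      have := sub_eq_zero.mp hw'0
      linear_combination (norm := module) this
    rw [this]
    exact hKw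
  -- the finite-rank approximants
  have hAK : ∀ N, ∀ v ∈ K N, A v ∈ K N := by
    intro N
    have hmap : Submodule.map (A : H →ₗ[ℂ] H) (K N) ≤ K N := by
      rw [hK]
      simp only [Finset.sup_eq_iSup, Submodule.map_iSup]
      refine iSup_le fun j => iSup_le fun hj => ?_
      refine le_trans ?_ (le_iSup₂ (f := fun j (_ : j ∈ Finset.range (N + 1)) => Hn j) j hj)
      rintro y ⟨v, hv, rfl⟩
      exact hAgr j v hv
    intro v hv
    exact hmap ⟨v, hv, rfl⟩
  set P : ℕ → (H →L[ℂ] H) := fun N => (K N).subtypeL.comp ((K N).orthogonalProjectionOnto) with hP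
  set F : ℕ → (H →L[ℂ] H) := fun N => A.comp (P N) with hF
  have hrankF : ∀ N, Module.rank ℂ (LinearMap.range ((F N : H →L[ℂ] H) : H →ₗ[ℂ] H))
      ≤ ((g N : ℕ) : Cardinal) := by
    intro N
    have h1 : LinearMap.range ((F N : H →L[ℂ] H) : H →ₗ[ℂ] H) ≤ K N := by
      rintro y ⟨x, rfl⟩
      exact hAK N (P N x) (Submodule.coe_mem _)
    have h2 : Module.rank ℂ (LinearMap.range ((F N : H →L[ℂ] H) : H →ₗ[ℂ] H))
        ≤ Module.rank ℂ (K N) := Submodule.rank_mono h1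
    refine h2.trans ?_
    rw [← finrank_eq_rank]
    exact_mod_cast hKrank N
  have hopnorm : ∀ N, ‖A - F N‖ ≤ M * c ^ (N + 1) := by
    intro N
    refine ContinuousLinearMap.opNorm_le_bound _ (by positivity) fun x => ?_
    have hsplit : (A - F N) x = A (x - P N x) := by
      simp [hF, map_sub]
    rw [hsplit]
    have hmem : x - P N x ∈ (K N)ᗮ := by
      have : P N x = ((K N).orthogonalProjectionOnto x : H) := rfl
      rw [this]
      exact Submodule.sub_starProjection_mem_orthogonal (K := K N) x
    have h1 : ‖A (x - P N x)‖ ≤ M * c ^ (N + 1) * ‖x - P N x‖ :=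
      hkeyCl N _ (hperp N hmem)
    refine h1.trans ?_
    refine mul_le_mul_of_nonneg_left ?_ (by positivity)
    -- ‖x - P N x‖ ≤ ‖x‖
    have hPmem : P N x ∈ K N := Submodule.coe_mem _
    have horthPx : (inner ℂ (P N x) (x - P N x) : ℂ) = 0 :=
      (Submodule.mem_orthogonal _ _).mp hmem _ hPmem
    have hpyth : ‖x‖ ^ 2 = ‖P N x‖ ^ 2 + ‖x - P N x‖ ^ 2 := by
      have hx : x = P N x + (x - P N x) := by module
      calc ‖x‖ ^ 2 = ‖P N x + (x - P N x)‖ ^ 2 := by rw [← hx]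
        _ = ‖P N x‖ ^ 2 + 2 * RCLike.re (inner ℂ (P N x) (x - P N x) : ℂ)
            + ‖x - P N x‖ ^ 2 := norm_add_sq _ _
        _ = ‖P N x‖ ^ 2 + ‖x - P N x‖ ^ 2 := by rw [horthPx]; simp
    have h2 : ‖x - P N x‖ ^ 2 ≤ ‖x‖ ^ 2 := by nlinarith [sq_nonneg ‖P N x‖]
    have := Real.sqrt_le_sqrt h2
    rwa [Real.sqrt_sq (norm_nonneg _), Real.sqrt_sq (norm_nonneg _)] at this
  -- the approximation numbers decay
  have hag : ∀ N, a (g N) ≤ M * c ^ (N + 1) := by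
    intro N
    rw [hSdef]
    refine le_trans (csInf_le (hbdd _) ⟨F N, hrankF N, rfl⟩) (hopnorm N)
  -- summability
  unfold MemSchatten
  have hpow1 : (fun n : ℕ => approxNumber (T - 1) n ^ (1 : ℝ)) = a := by
    funext n
    rw [Real.rpow_one]
  rw [hpow1]
  -- the comparison series
  set h : ℕ → ℝ := fun N => ((N : ℝ) + 2) ^ d * (M * c ^ (N + 1)) with hh
  have hhsum : Summable h := by
    refine Summable.congr
      (((summable_shifted_pow_mul_geometric d hc0 hc1).mul_left (M * c))) fun N => ?_
    simp only [hh]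
    ring
  have hhnn : ∀ N, 0 ≤ h N := fun N => by positivity
  set B : ℝ := (g 0 : ℝ) * a 0 + ∑' N, h N with hB
  -- partial sums over blocks
  have hblock : ∀ Kk : ℕ, ∑ n ∈ Finset.range (g Kk), a n ≤
      (g 0 : ℝ) * a 0 + ∑ N ∈ Finset.range Kk, h N := by
    intro Kk
    induction Kk with
    | zero =>
      simp only [Finset.range_zero, Finset.sum_empty, add_zero]
      have : ∀ n ∈ Finset.range (g 0), a n ≤ a 0 := fun n _ => hanti (Nat.zero_le n)
      refine le_trans (Finset.sum_le_card_nsmul _ _ _ this) ?_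
      rw [Finset.card_range, nsmul_eq_mul]
    | succ Kk ih =>
      have hgle : g Kk ≤ g (Kk + 1) := hgmono (by omega)
      have hsplit : ∑ n ∈ Finset.range (g (Kk + 1)), a n =
          ∑ n ∈ Finset.range (g Kk), a n + ∑ n ∈ Finset.Ico (g Kk) (g (Kk + 1)), a n := by
        rw [Finset.range_eq_Ico, Finset.range_eq_Ico,
          Finset.sum_Ico_consecutive _ (Nat.zero_le _) hgle]
      rw [hsplit, Finset.sum_range_succ]
      have hico : ∑ n ∈ Finset.Ico (g Kk) (g (Kk + 1)), a n ≤ h Kk := by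
        have hub : ∀ n ∈ Finset.Ico (g Kk) (g (Kk + 1)), a n ≤ M * c ^ (Kk + 1) := by
          intro n hn
          simp only [Finset.mem_Ico] at hn
          exact le_trans (hanti hn.1) (hag Kk)
        refine le_trans (Finset.sum_le_card_nsmul _ _ _ hub) ?_
        rw [nsmul_eq_mul, Nat.card_Ico]
        have hcard : ((g (Kk + 1) - g Kk : ℕ) : ℝ) ≤ ((Kk : ℝ) + 2) ^ d := by
          have h1 : g (Kk + 1) - g Kk ≤ (Kk + 2) ^ d := by
            simp only [hg]
            rw [show Kk + 1 + 1 = Kk + 2 from rfl]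
            omega
          calc ((g (Kk + 1) - g Kk : ℕ) : ℝ) ≤ (((Kk + 2) ^ d : ℕ) : ℝ) := by
                exact_mod_cast h1
            _ = ((Kk : ℝ) + 2) ^ d := by push_cast; ring
        rw [hh]
        exact mul_le_mul_of_nonneg_right hcard (by positivity)
      linarith [ih]
  -- uniform bound on all partial sums
  refine summable_of_sum_range_le (c := B) ha0 fun n => ?_
  have h1 : ∑ i ∈ Finset.range n, a i ≤ ∑ i ∈ Finset.range (g n), a i := by
    refine Finset.sum_le_sum_of_subset_of_nonneg ?_ (fun i _ _ => ha0 i)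
    exact Finset.range_subset_range.mpr (hgself n)
  refine h1.trans ((hblock n).trans ?_)
  rw [hB]
  have h2 : ∑ N ∈ Finset.range n, h N ≤ ∑' N, h N :=
    Summable.sum_le_tsum _ (fun N _ => hhnn N) hhsum
  linarith

end
end
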